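/- Let R be a Hecke symmetry on ℂ^N with parameter q ∈ ℂ \ {0,1,−1}, and let m, n be nonnegative integers with α = q^{n−m}·(q^{m−n} − q^{n−m})/(q − q⁻¹). Let 𝒜 be an associative unital ℂ-algebra and C a fixed N×N complex matrix satisfying: (i) Tr_{R(2)} R₁₂ = I_N; (ii) Tr_R I_N = α; (iii) for every N×N matrix A over 𝒜, Tr_{R(2)}(R₁₂·A₁·R₁₂⁻¹) = (Tr_R A)·I_N = Tr_{R(2)}(R₁₂⁻¹·A₁·R₁₂). Set f(x) = −(q−q⁻¹)x/(x−1), ℛ(x) = R + f(x)·I, and c = q^{2(m−n)}. Suppose L assigns to each u ∈ ℂ \ {0} an N×N matrix L(u) over 𝒜 such that for all u, v ∈ ℂ \ {0} with u/v, vc/u, uc/v, v/u all ≠ 1: ℛ(u/v)·L₁(u)·ℛ(vc/u)·L₁(v) = L₁(v)·ℛ(uc/v)·L₁(u)·ℛ(v/u). Then for all such u, v: (Tr_R L(u))·L(v) = L(v)·(Tr_R L(u)). -/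
import Mathlib


open Matrix

/-- `op12 X = X ⊗ I_N` acting on `V ⊗ V ⊗ V`. -/
def op12 {N : ℕ} (X : Matrix (Fin N × Fin N) (Fin N × Fin N) ℂ) :
    Matrix (Fin N × Fin N × Fin N) (Fin N × Fin N × Fin N) ℂ :=
  Matrix.of fun a b => X (a.1, a.2.1) (b.1, b.2.1) * (if a.2.2 = b.2.2 then 1 else 0)

/-- `op23 X = I_N ⊗ X` acting on `V ⊗ V ⊗ V`. -/
def op23 {N : ℕ} (X : Matrix (Fin N × Fin N) (Fin N × Fin N) ℂ) :
    Matrix (Fin N × Fin N × Fin N) (Fin N × Fin N × Fin N) ℂ :=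
  Matrix.of fun a b => (if a.1 = b.1 then 1 else 0) * X (a.2.1, a.2.2) (b.2.1, b.2.2)

/-- For an `N×N` matrix `X` with entries in `A`, `leg1 X = X ⊗ I_N`. -/
def leg1 {N : ℕ} {A : Type*} [Semiring A] (X : Matrix (Fin N) (Fin N) A) :
    Matrix (Fin N × Fin N) (Fin N × Fin N) A :=
  Matrix.of fun a b => X a.1 b.1 * (if a.2 = b.2 then 1 else 0)

/-- Embedding of a complex matrix into matrices over a `ℂ`-algebra `A`. -/
def emb {n : Type*} {A : Type*} [Semiring A] [Algebra ℂ A] (R : Matrix n n ℂ) :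
    Matrix n n A :=
  R.map (algebraMap ℂ A)

/-- The `R`-trace: `Tr_R X = Σ_{i,j} C^i_j X^j_i`. -/
def trR {N : ℕ} {A : Type*} [Ring A] [Algebra ℂ A]
    (C : Matrix (Fin N) (Fin N) ℂ) (X : Matrix (Fin N) (Fin N) A) : A :=
  ∑ i, ∑ j, C i j • X j i

/-- The partial `R`-trace over the second factor. -/
def trR2 {N : ℕ} {A : Type*} [Ring A] [Algebra ℂ A]
    (C : Matrix (Fin N) (Fin N) ℂ) (M : Matrix (Fin N × Fin N) (Fin N × Fin N) A) :
    Matrix (Fin N) (Fin N) A :=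
  Matrix.of fun r s => ∑ a, ∑ b, C a b • M (r, b) (s, a)


/-- The shift function of the Baxterized trigonometric `R`-matrix:
`f(x) = −(q−q⁻¹)x/(x−1)`. -/
noncomputable def fshift (q x : ℂ) : ℂ := -(q - q⁻¹) * x / (x - 1)

/-- `α = q^{n−m}·(m−n)_q`, the `R`-trace of the identity for bi-rank `(m|n)`. -/
noncomputable def alphaHecke (q : ℂ) (m n : ℕ) : ℂ :=
  q ^ ((n : ℤ) - m) * (q ^ ((m : ℤ) - n) - q ^ ((n : ℤ) - m)) / (q - q⁻¹)

set_option linter.unusedSectionVars false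

section Aux

variable {N : ℕ} {A : Type*} [Ring A] [Algebra ℂ A]

lemma leg1_mul (X Y : Matrix (Fin N) (Fin N) A) : leg1 X * leg1 Y = leg1 (X * Y) := by
  ext ⟨a1, a2⟩ ⟨b1, b2⟩
  simp [leg1, Matrix.mul_apply, Fintype.sum_prod_type, mul_ite, ite_mul,
    Finset.sum_ite_eq, Finset.sum_ite_eq', Finset.mul_sum, Finset.sum_mul]

lemma trR2_add (C : Matrix (Fin N) (Fin N) ℂ) (M M' : Matrix (Fin N × Fin N) (Fin N × Fin N) A) :
    trR2 C (M + M') = trR2 C M + trR2 C M' := by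
  ext r s
  simp [trR2, smul_add, Finset.sum_add_distrib]

lemma trR2_sub (C : Matrix (Fin N) (Fin N) ℂ) (M M' : Matrix (Fin N × Fin N) (Fin N × Fin N) A) :
    trR2 C (M - M') = trR2 C M - trR2 C M' := by
  ext r s
  simp [trR2, smul_sub, Finset.sum_sub_distrib]

lemma trR2_smul (C : Matrix (Fin N) (Fin N) ℂ) (c : ℂ)
    (M : Matrix (Fin N × Fin N) (Fin N × Fin N) A) :
    trR2 C (c • M) = c • trR2 C M := by
  ext r s
  simp [trR2, Finset.smul_sum, smul_comm c]

lemma sum_rot {β : Type*} [AddCommMonoid β] (F : Fin N → Fin N → Fin N → β) :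
    ∑ k, ∑ a, ∑ b, F a b k = ∑ a, ∑ b, ∑ k, F a b k :=
  (Finset.sum_comm).trans (Finset.sum_congr rfl fun _ _ => Finset.sum_comm)

lemma trR2_mul_leg1 (C : Matrix (Fin N) (Fin N) ℂ)
    (M : Matrix (Fin N × Fin N) (Fin N × Fin N) A) (X : Matrix (Fin N) (Fin N) A) :
    trR2 C (M * leg1 X) = trR2 C M * X := by
  ext r s
  have h1 : ∀ (b a : Fin N), (M * leg1 X) (r, b) (s, a) = ∑ k, M (r, b) (k, a) * X k s := by
    intro b a
    rw [Matrix.mul_apply, Fintype.sum_prod_type]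
    simp [leg1, mul_ite]
  show (∑ a, ∑ b, C a b • (M * leg1 X) (r, b) (s, a)) = _
  simp only [h1, Finset.smul_sum]
  have h2 : (trR2 C M * X) r s
      = ∑ k, ∑ a, ∑ b, C a b • (M (r, b) (k, a) * X k s) := by
    simp [trR2, Matrix.mul_apply, Finset.sum_mul, smul_mul_assoc]
  rw [h2]
  conv_rhs => rw [sum_rot]

lemma trR2_leg1_mul (C : Matrix (Fin N) (Fin N) ℂ)
    (X : Matrix (Fin N) (Fin N) A) (M : Matrix (Fin N × Fin N) (Fin N × Fin N) A) :
    trR2 C (leg1 X * M) = X * trR2 C M := by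
  ext r s
  have h1 : ∀ (b a : Fin N), (leg1 X * M) (r, b) (s, a) = ∑ k, X r k * M (k, b) (s, a) := by
    intro b a
    rw [Matrix.mul_apply, Fintype.sum_prod_type]
    simp [leg1, ite_mul, mul_ite]
  show (∑ a, ∑ b, C a b • (leg1 X * M) (r, b) (s, a)) = _
  simp only [h1, Finset.smul_sum]
  have h2 : (X * trR2 C M) r s
      = ∑ k, ∑ a, ∑ b, C a b • (X r k * M (k, b) (s, a)) := by
    simp [trR2, Matrix.mul_apply, Finset.mul_sum, mul_smul_comm]
  rw [h2]
  conv_rhs => rw [sum_rot]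

lemma trR2_leg1 (C : Matrix (Fin N) (Fin N) ℂ) (X : Matrix (Fin N) (Fin N) A) :
    trR2 C (leg1 X) = (∑ a, C a a) • X := by
  ext r s
  simp [trR2, leg1, mul_ite, mul_one, mul_zero, Finset.sum_ite_eq,
    Finset.sum_smul]

variable {I : Type*} [Fintype I] [DecidableEq I]

lemma emb_one : emb (1 : Matrix I I ℂ) = (1 : Matrix I I A) := by
  simp [emb]

lemma emb_add (M M' : Matrix I I ℂ) :
    emb (M + M') = (emb M : Matrix I I A) + emb M' := by
  ext i j; simp [emb]

lemma emb_sub (M M' : Matrix I I ℂ) :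
    emb (M - M') = (emb M : Matrix I I A) - emb M' := by
  ext i j; simp [emb]

lemma emb_smul (c : ℂ) (M : Matrix I I ℂ) :
    emb (c • M) = c • (emb M : Matrix I I A) := by
  ext i j
  simp only [emb, Matrix.map_apply, Matrix.smul_apply, smul_eq_mul, _root_.map_mul]
  rw [Algebra.smul_def]

lemma trR2_emb (C : Matrix (Fin N) (Fin N) ℂ) (M : Matrix (Fin N × Fin N) (Fin N × Fin N) ℂ) :
    trR2 C (M.map (algebraMap ℂ A)) = emb (trR2 C M) := by
  ext r s
  simp only [trR2, emb, Matrix.of_apply, Matrix.map_apply, map_sum, smul_eq_mul,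
    _root_.map_mul, Algebra.smul_def]

lemma scalar_key (q μ x y : ℂ) (hq : q ≠ 0) (hl : q - q⁻¹ ≠ 0) (hμ : μ ≠ 0)
    (hxy : x * y = μ * μ) (hx : x ≠ 1) (hy : y ≠ 1) :
    (q - q⁻¹) + fshift q x + fshift q y
      + fshift q x * fshift q y * (μ⁻¹ * (μ - μ⁻¹) / (q - q⁻¹)) = 0 := by
  have hx1 : x - 1 ≠ 0 := sub_ne_zero.mpr hx
  have hy1 : y - 1 ≠ 0 := sub_ne_zero.mpr hy
  have hFx : fshift q x * (x - 1) = -(q - q⁻¹) * x := by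
    unfold fshift; rw [div_mul_cancel₀ _ hx1]
  have hFy : fshift q y * (y - 1) = -(q - q⁻¹) * y := by
    unfold fshift; rw [div_mul_cancel₀ _ hy1]
  have hT : (μ⁻¹ * (μ - μ⁻¹) / (q - q⁻¹)) * ((q - q⁻¹) * (μ * μ)) = μ * μ - 1 := by
    rw [div_mul_eq_mul_div, mul_comm (q - q⁻¹) (μ * μ), ← mul_assoc, mul_div_assoc,
      div_self hl, mul_one]
    field_simp
  have hD : (q - q⁻¹) * (μ * μ) * ((x - 1) * (y - 1)) ≠ 0 :=
    mul_ne_zero (mul_ne_zero hl (mul_ne_zero hμ hμ)) (mul_ne_zero hx1 hy1)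
  apply mul_left_cancel₀ hD
  rw [mul_zero]
  linear_combination
    ((q - q⁻¹) * (μ * μ) * (y - 1)
        + fshift q y * (y - 1) * ((μ⁻¹ * (μ - μ⁻¹) / (q - q⁻¹)) * ((q - q⁻¹) * (μ * μ)))) * hFx
    + ((q - q⁻¹) * (μ * μ) * (x - 1)
        + (-(q - q⁻¹) * x) * ((μ⁻¹ * (μ - μ⁻¹) / (q - q⁻¹)) * ((q - q⁻¹) * (μ * μ)))) * hFy
    + ((q - q⁻¹) ^ 2 * x * y) * hT
    + (-(q - q⁻¹) ^ 2) * hxy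

lemma comb (T Z : Matrix (Fin N) (Fin N) A) (lam g f w : ℂ) :
    T + lam • Z + g • Z + f • Z + w • Z = T + (lam + g + f + w) • Z := by
  rw [add_smul, add_smul, add_smul]; abel

lemma trace_quad_left (C : Matrix (Fin N) (Fin N) ℂ)
    (E : Matrix (Fin N × Fin N) (Fin N × Fin N) A) (hE1 : trR2 C E = 1)
    (X Y : Matrix (Fin N) (Fin N) A) (t : A) (lam : ℂ)
    (hkey : trR2 C (E * leg1 X * E) = t • (1 : Matrix (Fin N) (Fin N) A) + lam • X)
    (f g : ℂ) :
    trR2 C ((E + f • 1) * leg1 X * (E + g • 1) * leg1 Y)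
      = t • Y + (lam + g + f + f * g * (∑ a, C a a)) • (X * Y) := by
  have e1 : (E + f • 1) * leg1 X * (E + g • 1) * leg1 Y
      = E * leg1 X * E * leg1 Y + g • (E * leg1 X * leg1 Y) + f • (leg1 X * E * leg1 Y)
        + (f * g) • (leg1 X * leg1 Y) := by
    simp only [add_mul, mul_add, Matrix.smul_mul, Matrix.mul_smul, one_mul, mul_one, smul_smul]
    rw [mul_comm g f]
    abel
  rw [e1, trR2_add, trR2_add, trR2_add, trR2_smul, trR2_smul, trR2_smul,
    trR2_mul_leg1 C (E * leg1 X * E) Y, hkey,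
    trR2_mul_leg1 C (E * leg1 X) Y, trR2_mul_leg1 C E X, hE1,
    trR2_mul_leg1 C (leg1 X * E) Y, trR2_leg1_mul C X E, hE1,
    leg1_mul, trR2_leg1]
  rw [add_mul (t • (1 : Matrix (Fin N) (Fin N) A)) (lam • X) Y, Matrix.smul_mul t 1 Y,
    one_mul, Matrix.smul_mul lam X Y]
  simp only [Matrix.one_mul, Matrix.mul_one, one_mul, mul_one, smul_smul]
  exact comb _ _ _ _ _ _

lemma trace_quad_right (C : Matrix (Fin N) (Fin N) ℂ)
    (E : Matrix (Fin N × Fin N) (Fin N × Fin N) A) (hE1 : trR2 C E = 1)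
    (X Y : Matrix (Fin N) (Fin N) A) (t : A) (lam : ℂ)
    (hkey : trR2 C (E * leg1 X * E) = t • (1 : Matrix (Fin N) (Fin N) A) + lam • X)
    (f g : ℂ) :
    trR2 C (leg1 Y * (E + f • 1) * leg1 X * (E + g • 1))
      = Y * (t • 1) + (lam + g + f + f * g * (∑ a, C a a)) • (Y * X) := by
  have e2 : leg1 Y * (E + f • 1) * leg1 X * (E + g • 1)
      = leg1 Y * (E * leg1 X * E) + g • (leg1 Y * E * leg1 X) + f • (leg1 Y * leg1 X * E)
        + (f * g) • (leg1 Y * leg1 X) := by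
    simp only [add_mul, mul_add, Matrix.smul_mul, Matrix.mul_smul, one_mul, mul_one, smul_smul,
      mul_assoc]
    rw [mul_comm g f]
    abel
  rw [e2, trR2_add, trR2_add, trR2_add, trR2_smul, trR2_smul, trR2_smul,
    trR2_leg1_mul C Y (E * leg1 X * E), hkey,
    trR2_mul_leg1 C (leg1 Y * E) X, trR2_leg1_mul C Y E, hE1,
    leg1_mul, trR2_leg1_mul C (Y * X) E, hE1,
    trR2_leg1]
  rw [mul_add Y (t • (1 : Matrix (Fin N) (Fin N) A)) (lam • X), Matrix.mul_smul Y lam X]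
  simp only [Matrix.one_mul, Matrix.mul_one, one_mul, mul_one, smul_smul]
  exact comb _ _ _ _ _ _


end Aux

/-- in an algebra of RS type with the critical charge `c = q^{2(m−n)}`,
the first quantum power sum `Tr_R L(u)` commutes with all generators `L(v)`. -/
theorem first_power_sum_central_RS {N : ℕ} {A : Type*} [Ring A] [Algebra ℂ A]
    (q : ℂ) (hq0 : q ≠ 0) (hq1 : q ≠ 1) (hqm1 : q ≠ -1)
    (m n : ℕ)
    (R : Matrix (Fin N × Fin N) (Fin N × Fin N) ℂ)
    (hRinv : IsUnit R)
    (hbraid : op12 R * op23 R * op12 R = op23 R * op12 R * op23 R)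
    (hHecke : (R - q • (1 : Matrix (Fin N × Fin N) (Fin N × Fin N) ℂ)) *
      (R + q⁻¹ • (1 : Matrix (Fin N × Fin N) (Fin N × Fin N) ℂ)) = 0)
    (C : Matrix (Fin N) (Fin N) ℂ)
    (hi : trR2 C R = (1 : Matrix (Fin N) (Fin N) ℂ))
    (hii : trR C (1 : Matrix (Fin N) (Fin N) ℂ) = alphaHecke q m n)
    (hiii1 : ∀ X : Matrix (Fin N) (Fin N) A,
      trR2 C (emb R * leg1 X * emb R⁻¹) = trR C X • (1 : Matrix (Fin N) (Fin N) A))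
    (hiii2 : ∀ X : Matrix (Fin N) (Fin N) A,
      trR2 C (emb R⁻¹ * leg1 X * emb R) = trR C X • (1 : Matrix (Fin N) (Fin N) A))
    (c : ℂ) (hcrit : c = q ^ (2 * ((m : ℤ) - n)))
    (L : ℂ → Matrix (Fin N) (Fin N) A)
    (hRS : ∀ u v : ℂ, u ≠ 0 → v ≠ 0 →
      u / v ≠ 1 → v * c / u ≠ 1 → u * c / v ≠ 1 → v / u ≠ 1 →
      emb (R + fshift q (u / v) • (1 : Matrix (Fin N × Fin N) (Fin N × Fin N) ℂ)) *
          leg1 (L u) *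
          emb (R + fshift q (v * c / u) • (1 : Matrix (Fin N × Fin N) (Fin N × Fin N) ℂ)) *
          leg1 (L v) =
        leg1 (L v) *
          emb (R + fshift q (u * c / v) • (1 : Matrix (Fin N × Fin N) (Fin N × Fin N) ℂ)) *
          leg1 (L u) *
          emb (R + fshift q (v / u) • (1 : Matrix (Fin N × Fin N) (Fin N × Fin N) ℂ)))
    (u v : ℂ) (hu : u ≠ 0) (hv : v ≠ 0)
    (h1 : u / v ≠ 1) (h2 : v * c / u ≠ 1) (h3 : u * c / v ≠ 1) (h4 : v / u ≠ 1) :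
    trR C (L u) • L v = L v * (trR C (L u) • (1 : Matrix (Fin N) (Fin N) A)) := by
  -- nonvanishing of q - q⁻¹
  have hlam0 : q - q⁻¹ ≠ 0 := by
    intro h0
    have hq' : q = q⁻¹ := sub_eq_zero.mp h0
    have hsq1 : q * q = 1 := by
      nth_rewrite 2 [hq']
      exact mul_inv_cancel₀ hq0
    have hfac : (q - 1) * (q + 1) = 0 := by ring_nf; linear_combination hsq1
    rcases mul_eq_zero.mp hfac with h | h
    · exact hq1 (sub_eq_zero.mp h)
    · exact hqm1 (eq_neg_of_add_eq_zero_left h)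
  set μ : ℂ := q ^ ((m : ℤ) - n) with hμdef
  have hμ0 : μ ≠ 0 := zpow_ne_zero _ hq0
  have hc : c = μ * μ := by
    rw [hcrit, hμdef, show (2 * ((m : ℤ) - n)) = ((m : ℤ) - n) + ((m : ℤ) - n) from by ring,
      zpow_add₀ hq0]
  -- tau
  have hτ : (∑ a, C a a) = μ⁻¹ * (μ - μ⁻¹) / (q - q⁻¹) := by
    have e2 : trR C (1 : Matrix (Fin N) (Fin N) ℂ) = ∑ a, C a a := by
      simp [trR, Matrix.one_apply]
    rw [← e2, hii, alphaHecke, hμdef,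
      show ((n : ℤ) - m) = -((m : ℤ) - n) from by ring, _root_.zpow_neg]
  -- Hecke relation in product form
  have h := hHecke
  simp only [sub_mul, mul_add, Matrix.mul_smul, Matrix.smul_mul, mul_one, one_mul,
    smul_smul, inv_mul_cancel₀ hq0, one_smul] at h
  have hh4 : R * R + q⁻¹ • R - (q • R + 1) = 0 := by
    rw [show R * R + q⁻¹ • R - (q • R + 1) = R * R - q • R + (q⁻¹ • R - 1) from by abel]
    exact h
  have hq2r : R * R + q⁻¹ • R = q • R + 1 := sub_eq_zero.mp hh4
  have hsq : R * R = (q - q⁻¹) • R + 1 := by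
    rw [sub_smul]
    rw [show (q : ℂ) • R - q⁻¹ • R + 1 = q • R + 1 - q⁻¹ • R from by abel, ← hq2r]
    abel
  have hRinveq : R⁻¹ = R - (q - q⁻¹) • 1 := by
    apply Matrix.inv_eq_right_inv
    rw [mul_sub, Matrix.mul_smul, mul_one, hsq]
    abel
  -- trR2 of emb R
  have hE1 : trR2 C (emb R : Matrix (Fin N × Fin N) (Fin N × Fin N) A) = 1 := by
    show trR2 C (R.map (algebraMap ℂ A)) = 1
    rw [trR2_emb, hi, emb_one]
  -- key trace formula
  have hkey : trR2 C ((emb R : Matrix (Fin N × Fin N) (Fin N × Fin N) A) * leg1 (L u) * emb R)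
      = trR C (L u) • (1 : Matrix (Fin N) (Fin N) A) + (q - q⁻¹) • (L u) := by
    have h1' := hiii1 (L u)
    rw [hRinveq, emb_sub, emb_smul, emb_one, mul_sub, Matrix.mul_smul, mul_one,
      trR2_sub, trR2_smul, trR2_mul_leg1, hE1, one_mul, sub_eq_iff_eq_add] at h1'
    exact h1'
  -- the RS relation with embedded Baxterized R-matrices
  have hrel := congrArg (trR2 C) (hRS u v hu hv h1 h2 h3 h4)
  have hembf : ∀ f : ℂ,
      (emb (R + f • (1 : Matrix (Fin N × Fin N) (Fin N × Fin N) ℂ)) :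
        Matrix (Fin N × Fin N) (Fin N × Fin N) A) = emb R + f • 1 := by
    intro f; rw [emb_add, emb_smul, emb_one]
  rw [hembf, hembf, hembf, hembf] at hrel
  rw [trace_quad_left C (emb R) hE1 (L u) (L v) (trR C (L u)) (q - q⁻¹) hkey
      (fshift q (u / v)) (fshift q (v * c / u)),
    trace_quad_right C (emb R) hE1 (L u) (L v) (trR C (L u)) (q - q⁻¹) hkey
      (fshift q (u * c / v)) (fshift q (v / u))] at hrel
  -- the two scalar coefficients vanish at the critical charge
  have hxy1 : (u / v) * (v * c / u) = μ * μ := by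
    rw [← hc]; field_simp; try ring
  have hxy2 : (u * c / v) * (v / u) = μ * μ := by
    rw [← hc]; field_simp; try ring
  have hg1 : (q - q⁻¹) + fshift q (v * c / u) + fshift q (u / v)
      + fshift q (u / v) * fshift q (v * c / u) * (∑ a, C a a) = 0 := by
    rw [hτ]
    linear_combination scalar_key q μ (u / v) (v * c / u) hq0 hlam0 hμ0 hxy1 h1 h2
  have hg2 : (q - q⁻¹) + fshift q (v / u) + fshift q (u * c / v)
      + fshift q (u * c / v) * fshift q (v / u) * (∑ a, C a a) = 0 := by
    rw [hτ]
    linear_combination scalar_key q μ (u * c / v) (v / u) hq0 hlam0 hμ0 hxy2 h3 h4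
  rw [hg1, hg2, zero_smul, zero_smul, add_zero, add_zero] at hrel
  exact hrel
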